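/- Let Sr(n,p) denote the number of intervals F ⊆ {1,...,n} satisfying p·min F ≥ |F| (including the empty set convention: only nonempty intervals are counted). Then for all n, p ≥ 1, Sr(n+1,p) - Sr(n,p) = (n+2) - ⌈(n+2)/(p+1)⌉. -/
import Mathlib

/-- Ceiling of a / b for natural numbers. -/
def ceilDiv (a b : ℕ) : ℕ := (a + b - 1) / b

/-- Number of nonempty intervals F ⊆ {1,...,n} with p·min F ≥ |F|. -/
noncomputable def Sr (n p : ℕ) : ℕ :=
  Nat.card {F : Finset ℕ //
    (∃ a b : ℕ, a ≤ b ∧ F = Finset.Icc a b) ∧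
    F ⊆ Finset.Icc 1 n ∧
    p * sInf (F : Set ℕ) ≥ F.card}

private def S (n p : ℕ) : Finset (ℕ × ℕ) :=
  (Finset.Icc 1 n ×ˢ Finset.Icc 1 n).filter (fun q => q.1 ≤ q.2 ∧ q.2 + 1 ≤ p * q.1 + q.1)

private lemma mem_S {n p : ℕ} {q : ℕ × ℕ} :
    q ∈ S n p ↔ 1 ≤ q.1 ∧ q.2 ≤ n ∧ q.1 ≤ q.2 ∧ q.2 + 1 ≤ p * q.1 + q.1 := by
  simp only [S, Finset.mem_filter, Finset.mem_product, Finset.mem_Icc]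
  omega

private lemma Sr_eq (n p : ℕ) : Sr n p = (S n p).card := by
  rw [Sr, ← Nat.card_eq_finsetCard]
  apply Nat.card_congr
  refine Equiv.symm (Equiv.ofBijective (fun q =>
    ⟨Finset.Icc q.1.1 q.1.2, ?_, ?_, ?_⟩) ⟨?_, ?_⟩)
  · exact ⟨q.1.1, q.1.2, (mem_S.mp q.2).2.2.1, rfl⟩
  · have h := mem_S.mp q.2
    exact Finset.Icc_subset_Icc h.1 h.2.1
  · have h := mem_S.mp q.2
    rw [Finset.coe_Icc, csInf_Icc h.2.2.1, Nat.card_Icc]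
    have := h.2.2.2
    omega
  · rintro ⟨q1, hq1⟩ ⟨q2, hq2⟩ h
    have h1 := mem_S.mp hq1
    have h2 := mem_S.mp hq2
    simp only [Subtype.mk.injEq] at h ⊢
    have e1 : q1.1 ∈ Finset.Icc q2.1 q2.2 := by
      rw [← h]; simp [Finset.mem_Icc]; omega
    have e2 : q2.1 ∈ Finset.Icc q1.1 q1.2 := by
      rw [h]; simp [Finset.mem_Icc]; omega
    have e3 : q1.2 ∈ Finset.Icc q2.1 q2.2 := by
      rw [← h]; simp [Finset.mem_Icc]; omega
    have e4 : q2.2 ∈ Finset.Icc q1.1 q1.2 := by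
      rw [h]; simp [Finset.mem_Icc]; omega
    simp only [Finset.mem_Icc] at e1 e2 e3 e4
    exact Prod.ext (by omega) (by omega)
  · rintro ⟨F, ⟨a, b, hab, rfl⟩, hsub, hcard⟩
    have ha : a ∈ Finset.Icc 1 n := hsub (Finset.mem_Icc.mpr ⟨le_rfl, hab⟩)
    have hb : b ∈ Finset.Icc 1 n := hsub (Finset.mem_Icc.mpr ⟨hab, le_rfl⟩)
    simp only [Finset.mem_Icc] at ha hb
    rw [Finset.coe_Icc, csInf_Icc hab, Nat.card_Icc] at hcard
    have hm : (a, b) ∈ S n p := mem_S.mpr ⟨ha.1, hb.2, hab, by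
      show b + 1 ≤ p * a + a; omega⟩
    exact ⟨⟨(a, b), hm⟩, rfl⟩

private lemma ceil_le_iff {c d a : ℕ} (hd : 1 ≤ d) : ceilDiv c d ≤ a ↔ c ≤ d * a := by
  rw [ceilDiv, Nat.div_le_iff_le_mul_add_pred hd]
  omega

theorem stmt_2 (n p : ℕ) (hn : 1 ≤ n) (hp : 1 ≤ p) :
    Sr (n + 1) p - Sr n p = (n + 2) - ceilDiv (n + 2) (p + 1) := by
  set A := ceilDiv (n + 2) (p + 1) with hA
  have key : S (n + 1) p = S n p ∪ (Finset.Icc A (n + 1)).image (fun a => (a, n + 1)) := by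
    ext q
    simp only [Finset.mem_union, Finset.mem_image, Finset.mem_Icc, mem_S]
    constructor
    · rintro ⟨h1, h2, h3, h4⟩
      rcases Nat.lt_or_ge q.2 (n + 1) with h | h
      · exact Or.inl ⟨h1, by omega, h3, h4⟩
      · refine Or.inr ⟨q.1, ⟨?_, by omega⟩, by ext <;> simp <;> omega⟩
        rw [hA, ceil_le_iff (by omega)]
        have h5 : q.2 = n + 1 := by omega
        have : (p + 1) * q.1 = p * q.1 + q.1 := by ring
        omega
    · rintro (⟨h1, h2, h3, h4⟩ | ⟨a, ⟨ha1, ha2⟩, rfl⟩)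
      · exact ⟨h1, by omega, h3, h4⟩
      · rw [hA, ceil_le_iff (by omega)] at ha1
        have : (p + 1) * a = p * a + a := by ring
        have hA1 : 1 ≤ a := by
          have : n + 2 ≤ (p + 1) * a := ha1
          by_contra h
          simp only [not_le, Nat.lt_one_iff] at h
          subst h; simp at this
        refine ⟨hA1, le_rfl, by omega, ?_⟩
        show n + 1 + 1 ≤ p * a + a
        omega
  have hdisj : Disjoint (S n p) ((Finset.Icc A (n + 1)).image (fun a => (a, n + 1))) := by
    rw [Finset.disjoint_left]
    rintro q hq hq'
    simp only [Finset.mem_image, Finset.mem_Icc] at hq'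
    obtain ⟨a, _, rfl⟩ := hq'
    have := (mem_S.mp hq).2.1
    omega
  have hinj : Function.Injective (fun a : ℕ => (a, n + 1)) := fun a b h => by
    simpa using h
  rw [Sr_eq, Sr_eq, key, Finset.card_union_of_disjoint hdisj,
    Finset.card_image_of_injective _ hinj, Nat.card_Icc]
  omega
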